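/- For every finite tournament (X, →) there exists a 2-coloring c of the set of arcs {(u,v) : u → v} such that no 3-cycle is monochromatic: for all x, y, z with x → y, y → z, and z → x, the three arcs (x,y), (y,z), (z,x) do not all receive the same color. Consequently, with A the 2-element tournament and B the 3-element tournament carrying a 3-cycle, for every finite tournament C there is a 2-coloring of the embeddings of A into C such that no embedding of B into C is monochromatic; hence the class of finite tournaments is not a Ramsey class. -/

import Mathlib

open FirstOrder FirstOrder.Language FirstOrder.Language.Structure CategoryTheory

/-- The single binary relation of the language `Language.graph` (the language with one binary
relation symbol and no other symbols), interpreted in a structure `M`. -/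
abbrev arc {M : Type*} [Language.graph.Structure M] (x y : M) : Prop :=
  RelMap Language.adj ![x, y]

/-- A structure for the language with a single binary relation is a tournament if the relation
is irreflexive and exactly one of `x → y`, `y → x` holds for distinct `x`, `y`. -/
def IsTournament (M : Type*) [Language.graph.Structure M] : Prop :=
  (∀ x : M, ¬ arc x x) ∧ ∀ x y : M, x ≠ y → Xor' (arc x y) (arc y x)

/-- The class of all finite tournaments, as structures for the language with a single
binary relation symbol. -/
def TournK : Set (Bundled Language.graph.Structure) :=
  {M | Finite M ∧ IsTournament M}

/-- A class `K` of structures is a Ramsey class if for all `A, B ∈ K` there is `C ∈ K` such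
that every `2`-colouring of the embeddings `A ↪ C` admits a monochromatic embedding `B ↪ C`. -/
def IsRamseyClass {L : FirstOrder.Language} (K : Set (Bundled L.Structure)) : Prop :=
  ∀ A ∈ K, ∀ B ∈ K, ∃ C ∈ K, ∀ c : (A ↪[L] C) → Bool,
    ∃ g : B ↪[L] C, ∀ f₁ f₂ : A ↪[L] C,
      Set.range ⇑f₁ ⊆ Set.range ⇑g → Set.range ⇑f₂ ⊆ Set.range ⇑g → c f₁ = c f₂


section Aux

open FirstOrder FirstOrder.Language FirstOrder.Language.Structure

/-- Structure on a type given by a binary relation. -/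
def relStr (V : Type*) (r : V → V → Prop) : Language.graph.Structure V where
  funMap := fun f => f.elim
  RelMap := fun R => match R with
    | .adj => fun x => r (x 0) (x 1)

lemma emb_arc {M N : Type*} [Language.graph.Structure M] [Language.graph.Structure N]
    (f : M ↪[Language.graph] N) (x y : M) : arc (f x) (f y) ↔ arc x y := by
  have h : (![f x, f y] : Fin 2 → N) = f ∘ ![x, y] := by
    ext i; fin_cases i <;> rfl
  rw [arc, h, f.map_rel]

/-- Build an embedding of graph-structures from an injection respecting `arc`. -/
def mkEmb {M N : Type*} [Language.graph.Structure M] [Language.graph.Structure N]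
    (f : M → N) (hinj : Function.Injective f)
    (h : ∀ x y : M, arc (f x) (f y) ↔ arc x y) : M ↪[Language.graph] N where
  toFun := f
  inj' := hinj
  map_fun' := fun {n} F => F.elim
  map_rel' := by
    intro n R x
    cases R
    have hx : x = ![x 0, x 1] := by ext i; fin_cases i <;> rfl
    have hfx : f ∘ x = ![f (x 0), f (x 1)] := by ext i; fin_cases i <;> rfl
    rw [hfx]
    conv_rhs => rw [hx]
    exact h (x 0) (x 1)

theorem part1 (X : Type*) [Finite X] (r : X → X → Prop)
    (hirr : ∀ x, ¬ r x x) (_hxor : ∀ x y, x ≠ y → Xor' (r x y) (r y x)) :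
    ∃ c : {p : X × X // r p.1 p.2} → Bool,
      ∀ x y z, ∀ (h₁ : r x y) (h₂ : r y z) (h₃ : r z x),
        ¬(c ⟨(x, y), h₁⟩ = c ⟨(y, z), h₂⟩ ∧ c ⟨(y, z), h₂⟩ = c ⟨(z, x), h₃⟩) := by
  have : Countable X := Finite.to_countable
  obtain ⟨e, he⟩ := exists_injective_nat X
  refine ⟨fun p => decide (e p.1.1 < e p.1.2), ?_⟩
  intro x y z h₁ h₂ h₃ ⟨hc₁, hc₂⟩
  have hxy : x ≠ y := fun h => hirr x (h ▸ h₁)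
  have hyz : y ≠ z := fun h => hirr y (h ▸ h₂)
  have hzx : z ≠ x := fun h => hirr z (h ▸ h₃)
  have exy := he.ne hxy
  have eyz := he.ne hyz
  have ezx := he.ne hzx
  simp only [decide_eq_decide] at hc₁ hc₂
  omega

theorem part2 : ∀ A ∈ TournK, Nat.card A = 2 →
    ∀ B ∈ TournK, Nat.card B = 3 → (∃ x y z : B, arc x y ∧ arc y z ∧ arc z x) →
    ∀ C ∈ TournK, ∃ c : (A ↪[Language.graph] C) → Bool,
      ∀ g : B ↪[Language.graph] C, ∃ f₁ f₂ : A ↪[Language.graph] C,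
        Set.range ⇑f₁ ⊆ Set.range ⇑g ∧ Set.range ⇑f₂ ⊆ Set.range ⇑g ∧ c f₁ ≠ c f₂ := by
  classical
  rintro A ⟨hAfin, hAirr, hAxor⟩ hA2 B hB hB3 ⟨x, y, z, hxy, hyz, hzx⟩
    C ⟨hCfin, hCirr, hCxor⟩
  obtain ⟨c₀, hc₀⟩ := part1 C (fun u v => arc u v) hCirr hCxor
  obtain ⟨a₀, b₀, hab₀, huniv₀⟩ := Nat.card_eq_two_iff.mp hA2
  obtain ⟨a, b, hab, harc, huniv⟩ :
      ∃ a b : A, a ≠ b ∧ arc a b ∧ ({a, b} : Set A) = Set.univ := by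
    rcases hAxor a₀ b₀ hab₀ with ⟨h, _⟩ | ⟨h, _⟩
    · exact ⟨a₀, b₀, hab₀, h, huniv₀⟩
    · exact ⟨b₀, a₀, hab₀.symm, h, by rw [Set.pair_comm]; exact huniv₀⟩
  have hall : ∀ t : A, t = a ∨ t = b := by
    intro t
    have : t ∈ ({a, b} : Set A) := huniv ▸ Set.mem_univ t
    simpa using this
  have hba : ¬ arc b a := ((hAxor a b hab).resolve_right (fun h => h.2 harc)).2
  -- embedding sending a ↦ u, b ↦ v whenever arc u v
  have mk : ∀ u v : C, ∀ _h : arc u v,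
      ∃ e : A ↪[Language.graph] C, e a = u ∧ e b = v := by
    intro u v huv
    have huv' : u ≠ v := fun h => hCirr u (h ▸ huv)
    have hvu : ¬ arc v u := ((hCxor u v huv').resolve_right (fun h => h.2 huv)).2
    have hbna : ¬ (b = a) := fun h => hab h.symm
    refine ⟨mkEmb (fun t => if t = a then u else v) ?_ ?_, if_pos rfl, if_neg hbna⟩
    · intro s t hst
      rcases hall s with hs | hs <;> rcases hall t with ht | ht <;>
        rw [hs, ht] at hst <;> simp only [if_pos rfl, if_neg hbna] at hst
      · exact hs.trans ht.symm
      · exact absurd hst huv'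
      · exact absurd hst.symm huv'
      · exact hs.trans ht.symm
    · intro s t
      rcases hall s with hs | hs <;> rcases hall t with ht | ht <;>
        rw [hs, ht] <;> simp only [if_pos rfl, if_neg hbna]
      · exact ⟨fun h => absurd h (hCirr u), fun h => absurd h (hAirr a)⟩
      · exact ⟨fun _ => harc, fun _ => huv⟩
      · exact ⟨fun h => absurd h hvu, fun h => absurd h hba⟩
      · exact ⟨fun h => absurd h (hCirr v), fun h => absurd h (hAirr b)⟩
  refine ⟨fun f => c₀ ⟨(f a, f b), (emb_arc f a b).mpr harc⟩, ?_⟩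
  intro g
  have a1 : arc (g x) (g y) := (emb_arc g x y).mpr hxy
  have a2 : arc (g y) (g z) := (emb_arc g y z).mpr hyz
  have a3 : arc (g z) (g x) := (emb_arc g z x).mpr hzx
  have hne := hc₀ (g x) (g y) (g z) a1 a2 a3
  have key : c₀ ⟨(g x, g y), a1⟩ ≠ c₀ ⟨(g y, g z), a2⟩ ∨
      c₀ ⟨(g y, g z), a2⟩ ≠ c₀ ⟨(g z, g x), a3⟩ := by
    by_contra h
    push_neg at h
    exact hne ⟨h.1, h.2⟩
  obtain ⟨e₁, he₁a, he₁b⟩ := mk (g x) (g y) a1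
  obtain ⟨e₂, he₂a, he₂b⟩ := mk (g y) (g z) a2
  obtain ⟨e₃, he₃a, he₃b⟩ := mk (g z) (g x) a3
  have hr : ∀ (e : A ↪[Language.graph] C) (u v : B), e a = g u → e b = g v →
      Set.range ⇑e ⊆ Set.range ⇑g := by
    rintro e u v hu hv _ ⟨t, rfl⟩
    rcases hall t with rfl | rfl
    · exact ⟨u, hu.symm⟩
    · exact ⟨v, hv.symm⟩
  have hc : ∀ (e : A ↪[Language.graph] C) (u v : C) (h : arc u v), e a = u → e b = v →
      c₀ ⟨(e a, e b), (emb_arc e a b).mpr harc⟩ = c₀ ⟨(u, v), h⟩ := by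
    intro e u v h hu hv
    congr 1
    exact Subtype.ext (by simp [hu, hv])
  rcases key with h | h
  · refine ⟨e₁, e₂, hr e₁ x y he₁a he₁b, hr e₂ y z he₂a he₂b, fun hEq => h ?_⟩
    have hEq' : c₀ ⟨(e₁ a, e₁ b), (emb_arc e₁ a b).mpr harc⟩ =
        c₀ ⟨(e₂ a, e₂ b), (emb_arc e₂ a b).mpr harc⟩ := hEq
    rw [hc e₁ _ _ a1 he₁a he₁b, hc e₂ _ _ a2 he₂a he₂b] at hEq'
    exact hEq'
  · refine ⟨e₂, e₃, hr e₂ y z he₂a he₂b, hr e₃ z x he₃a he₃b, fun hEq => h ?_⟩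
    have hEq' : c₀ ⟨(e₂ a, e₂ b), (emb_arc e₂ a b).mpr harc⟩ =
        c₀ ⟨(e₃ a, e₃ b), (emb_arc e₃ a b).mpr harc⟩ := hEq
    rw [hc e₂ _ _ a2 he₂a he₂b, hc e₃ _ _ a3 he₃a he₃b] at hEq'
    exact hEq'

/-- The 2-element tournament. -/
def T2 : Bundled Language.graph.Structure :=
  ⟨ULift (Fin 2), relStr _ (fun u v => u.down = 0 ∧ v.down = 1)⟩

/-- The 3-cycle tournament. -/
def T3 : Bundled Language.graph.Structure :=
  ⟨ULift (Fin 3), relStr _ (fun u v => v.down = u.down + 1)⟩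

lemma T2_mem : T2 ∈ TournK := by
  refine ⟨inferInstanceAs (Finite (ULift (Fin 2))), ?_, ?_⟩
  · rintro ⟨u⟩ h
    have h' : u = 0 ∧ u = 1 := h
    obtain ⟨rfl, h1⟩ := h'
    exact absurd h1 (by decide)
  · rintro ⟨u⟩ ⟨v⟩ huv
    have huv' : u ≠ v := fun h => huv (congrArg ULift.up h)
    show Xor' (u = 0 ∧ v = 1) (v = 0 ∧ u = 1)
    clear huv
    revert huv'
    revert u v
    unfold Xor'
    decide

lemma T3_mem : T3 ∈ TournK := by
  refine ⟨inferInstanceAs (Finite (ULift (Fin 3))), ?_, ?_⟩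
  · rintro ⟨u⟩ h
    have h' : u = u + 1 := h
    revert h'
    fin_cases u <;> decide
  · rintro ⟨u⟩ ⟨v⟩ huv
    have huv' : u ≠ v := fun h => huv (congrArg ULift.up h)
    show Xor' (v = u + 1) (u = v + 1)
    clear huv
    revert huv'
    revert u v
    unfold Xor'
    decide

theorem notRamsey : ¬ IsRamseyClass TournK := by
  intro hR
  obtain ⟨C, hC, hCprop⟩ := hR T2 T2_mem T3 T3_mem
  have hcyc : ∃ x y z : T3, arc x y ∧ arc y z ∧ arc z x :=
    ⟨⟨0⟩, ⟨1⟩, ⟨2⟩, (by decide : (1 : Fin 3) = 0 + 1), (by decide : (2 : Fin 3) = 1 + 1),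
      (by decide : (0 : Fin 3) = 2 + 1)⟩
  obtain ⟨c, hc⟩ := part2 T2 T2_mem (by simp [T2]) T3 T3_mem (by simp [T3]) hcyc C hC
  obtain ⟨g, hg⟩ := hCprop c
  obtain ⟨f₁, f₂, h₁, h₂, hne⟩ := hc g
  exact hne (hg f₁ f₂ h₁ h₂)

end Aux

/-- Every finite tournament admits a `2`-colouring of its arcs with no
monochromatic `3`-cycle; consequently, with `A` the `2`-element tournament and `B` the
`3`-element tournament carrying a `3`-cycle, for every finite tournament `C` there is a
`2`-colouring of the embeddings of `A` into `C` such that no embedding of `B` into `C` is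
monochromatic; hence the class of finite tournaments is not a Ramsey class. -/

theorem stmt8 :
    (∀ (X : Type) [Finite X] (r : X → X → Prop),
      (∀ x, ¬ r x x) → (∀ x y, x ≠ y → Xor' (r x y) (r y x)) →
      ∃ c : {p : X × X // r p.1 p.2} → Bool,
        ∀ x y z, ∀ (h₁ : r x y) (h₂ : r y z) (h₃ : r z x),
          ¬(c ⟨(x, y), h₁⟩ = c ⟨(y, z), h₂⟩ ∧ c ⟨(y, z), h₂⟩ = c ⟨(z, x), h₃⟩)) ∧
    (∀ A ∈ TournK, Nat.card A = 2 →
      ∀ B ∈ TournK, Nat.card B = 3 → (∃ x y z : B, arc x y ∧ arc y z ∧ arc z x) →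
      ∀ C ∈ TournK, ∃ c : (A ↪[Language.graph] C) → Bool,
        ∀ g : B ↪[Language.graph] C, ∃ f₁ f₂ : A ↪[Language.graph] C,
          Set.range ⇑f₁ ⊆ Set.range ⇑g ∧ Set.range ⇑f₂ ⊆ Set.range ⇑g ∧ c f₁ ≠ c f₂) ∧
    ¬ IsRamseyClass TournK := by
  refine ⟨part1, part2, notRamsey⟩
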